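/- For every integer D there exists a finite simple graph G with Δ(G) ≥ D, mad(G) < 3, and χ²(G) ≥ Δ(G) + 2. Consequently, there is no integer D₀ such that every graph G with mad(G) < 3 and Δ(G) ≥ D₀ satisfies χ²(G) = Δ(G) + 1. -/

import Mathlib

open SimpleGraph

def SimpleGraph.square {V : Type*} (G : SimpleGraph V) : SimpleGraph V where
  Adj u v := u ≠ v ∧ (G.Adj u v ∨ ∃ w, G.Adj u w ∧ G.Adj w v)
  symm := by
    constructor
    rintro u v ⟨h, hadj | ⟨w, h1, h2⟩⟩
    · exact ⟨Ne.symm h, Or.inl hadj.symm⟩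
    · exact ⟨Ne.symm h, Or.inr ⟨w, h2.symm, h1.symm⟩⟩
  loopless := ⟨fun v h => h.1 rfl⟩

/-- `G` is list `k`-colorable. -/
def SimpleGraph.IsListColorable {V : Type*} (G : SimpleGraph V) (k : ℕ) : Prop :=
  ∀ L : V → Finset ℕ, (∀ v, (L v).card = k) →
    ∃ c : V → ℕ, (∀ v, c v ∈ L v) ∧ ∀ u v, G.Adj u v → c u ≠ c v

noncomputable def deg {V : Type*} (G : SimpleGraph V) (v : V) : ℕ :=
  (G.neighborSet v).ncard

noncomputable def maxDeg {V : Type*} [Fintype V] (G : SimpleGraph V) : ℕ :=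
  Finset.univ.sup (deg G)

noncomputable def chi2l {V : Type*} (G : SimpleGraph V) : ℕ :=
  sInf {k | (G.square).IsListColorable k}

def madLT {V : Type*} (G : SimpleGraph V) (m : ℝ) : Prop :=
  ∀ H : G.Subgraph, H.verts.Nonempty →
    2 * (H.edgeSet.ncard : ℝ) < m * (H.verts.ncard : ℝ)



namespace Cons

def rel (t : ℕ) (x y : ℕ) : Prop :=
  (x = 0 ∧ 2 ≤ y ∧ y ≤ t+1) ∨ (x = 1 ∧ t+1 ≤ y ∧ y ≤ 2*t) ∨ (2 ≤ x ∧ x ≤ t ∧ y = x + t)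

def Gr (t : ℕ) : SimpleGraph (Fin (2*t+1)) where
  Adj u v := rel t u.val v.val ∨ rel t v.val u.val
  symm := ⟨fun u v h => h.symm⟩
  loopless := ⟨fun v h => by simp only [rel] at h; omega⟩

lemma adj_iff {t : ℕ} {u v : Fin (2*t+1)} :
    (Gr t).Adj u v ↔ rel t u.val v.val ∨ rel t v.val u.val := Iff.rfl

-- tokens
def pt (t : ℕ) (u v : Fin (2*t+1)) : Fin (2*t+1) × Fin 3 :=
  if u.val = 0 then (v, 0)
  else if v.val = 0 then (u, 1)
  else if u.val = 1 then (if v.val = t+1 then (u, 0) else (v, 0))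
  else if v.val = 1 then (if u.val = t+1 then (u, 2) else (u, 1))
  else (u, 2)

def rp (t : ℕ) (q : Fin (2*t+1) × Fin 3) : Sym2 ℕ :=
  if q.1.val = 1 then s(1, t+1)
  else if q.2 = 2 then
    (if q.1.val = t+1 then s(1, t+1)
     else if q.1.val ≤ t then s(q.1.val, q.1.val + t)
     else s(q.1.val - t, q.1.val))
  else (if q.1.val ≤ t+1 then s(0, q.1.val) else s(1, q.1.val))

lemma master {t : ℕ} (h3 : 3 ≤ t) {u v : Fin (2*t+1)} (h : (Gr t).Adj u v) :
    pt t u v ≠ pt t v u ∧ rp t (pt t u v) = s(u.val, v.val) ∧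
      ((pt t u v).1 = u ∨ (pt t u v).1 = v) ∧ (pt t u v).1.val ≠ 0 ∧
      ((pt t u v).1.val = 1 → (pt t u v).2 = 0) ∧
      (2 ≤ u.val → 2 ≤ v.val → (pt t u v).2 = 2) := by
  have hu := u.isLt
  have hv := v.isLt
  rcases h with (⟨hx, hy1, hy2⟩ | ⟨hx, hy1, hy2⟩ | ⟨hx1, hx2, hy⟩) |
    (⟨hx, hy1, hy2⟩ | ⟨hx, hy1, hy2⟩ | ⟨hx1, hx2, hy⟩)
  · -- u = 0, 2 ≤ v ≤ t+1  : pt u v = (v,0), pt v u = (v,1)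
    have e1 : pt t u v = (v, 0) := by rw [pt, if_pos hx]
    have e2 : pt t v u = (v, 1) := by
      rw [pt, if_neg (by omega), if_pos hx]
    have e3 : rp t (v, (0 : Fin 3)) = s(0, v.val) := by
      rw [rp]; simp only
      rw [if_neg (by omega), if_neg (by decide), if_pos (by omega)]
    exact ⟨by simp [e1, e2], by rw [e1, e3, hx], by simp [e1], by simp only [e1]; omega,
      by simp [e1] <;> omega, by omega⟩
  · -- u = 1, t+1 ≤ v ≤ 2t
    by_cases hc : v.val = t+1
    · have e1 : pt t u v = (u, 0) := by
        rw [pt, if_neg (by omega), if_neg (by omega), if_pos hx, if_pos hc]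
      have e2 : pt t v u = (v, 2) := by
        rw [pt, if_neg (by omega), if_neg (by omega), if_neg (by omega), if_pos hx, if_pos hc]
      have e3 : rp t (u, (0 : Fin 3)) = s(1, t+1) := by
        rw [rp]; simp only
        rw [if_pos hx]
      refine ⟨by simp [e1, e2] <;> omega, by rw [e1, e3, hx, hc], by simp [e1], by simp only [e1]; omega,
        by simp [e1], by omega⟩
    · have e1 : pt t u v = (v, 0) := by
        rw [pt, if_neg (by omega), if_neg (by omega), if_pos hx, if_neg hc]
      have e2 : pt t v u = (v, 1) := by
        rw [pt, if_neg (by omega), if_neg (by omega), if_neg (by omega), if_pos hx, if_neg hc]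
      have e3 : rp t (v, (0 : Fin 3)) = s(1, v.val) := by
        rw [rp]; simp only
        rw [if_neg (by omega), if_neg (by decide), if_neg (by omega)]
      exact ⟨by simp [e1, e2], by rw [e1, e3, hx], by simp [e1], by simp only [e1]; omega,
        by simp [e1] <;> omega, by omega⟩
  · -- 2 ≤ u ≤ t, v = u + t  (matching)
    have e1 : pt t u v = (u, 2) := by
      rw [pt, if_neg (by omega), if_neg (by omega), if_neg (by omega), if_neg (by omega)]
    have e2 : pt t v u = (v, 2) := by
      rw [pt, if_neg (by omega), if_neg (by omega), if_neg (by omega), if_neg (by omega)]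
    have e3 : rp t (u, (2 : Fin 3)) = s(u.val, u.val + t) := by
      rw [rp]; simp only
      rw [if_neg (by omega), if_pos trivial, if_neg (by omega), if_pos (by omega)]
    refine ⟨by simp [e1, e2] <;> omega, by rw [e1, e3, hy], by simp [e1], by simp only [e1]; omega,
      by simp [e1] <;> omega, fun _ _ => by simp [e1]⟩
  · -- v = 0, 2 ≤ u ≤ t+1
    have e1 : pt t u v = (u, 1) := by
      rw [pt, if_neg (by omega), if_pos hx]
    have e2 : pt t v u = (u, 0) := by rw [pt, if_pos hx]
    have e3 : rp t (u, (1 : Fin 3)) = s(0, u.val) := by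
      rw [rp]; simp only
      rw [if_neg (by omega), if_neg (by decide), if_pos (by omega)]
    refine ⟨by simp [e1, e2], ?_, by simp [e1], by simp only [e1]; omega,
      by simp [e1] <;> omega, by omega⟩
    rw [e1, e3, hx, Sym2.eq_swap]
  · -- v = 1, t+1 ≤ u ≤ 2t
    by_cases hc : u.val = t+1
    · have e1 : pt t u v = (u, 2) := by
        rw [pt, if_neg (by omega), if_neg (by omega), if_neg (by omega), if_pos hx, if_pos hc]
      have e2 : pt t v u = (v, 0) := by
        rw [pt, if_neg (by omega), if_neg (by omega), if_pos hx, if_pos hc]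
      have e3 : rp t (u, (2 : Fin 3)) = s(1, t+1) := by
        rw [rp]; simp only
        rw [if_neg (by omega), if_pos trivial, if_pos hc]
      refine ⟨by simp [e1, e2] <;> omega, ?_, by simp [e1], by simp only [e1]; omega,
        by simp [e1] <;> omega, by omega⟩
      rw [e1, e3, hx, hc, Sym2.eq_swap]
    · have e1 : pt t u v = (u, 1) := by
        rw [pt, if_neg (by omega), if_neg (by omega), if_neg (by omega), if_pos hx, if_neg hc]
      have e2 : pt t v u = (u, 0) := by
        rw [pt, if_neg (by omega), if_neg (by omega), if_pos hx, if_neg hc]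
      have e3 : rp t (u, (1 : Fin 3)) = s(1, u.val) := by
        rw [rp]; simp only
        rw [if_neg (by omega), if_neg (by decide), if_neg (by omega)]
      refine ⟨by simp [e1, e2], ?_, by simp [e1], by simp only [e1]; omega,
        by simp [e1] <;> omega, by omega⟩
      rw [e1, e3, hx, Sym2.eq_swap]
  · -- 2 ≤ v ≤ t, u = v + t (matching, reversed)
    have e1 : pt t u v = (u, 2) := by
      rw [pt, if_neg (by omega), if_neg (by omega), if_neg (by omega), if_neg (by omega)]
    have e2 : pt t v u = (v, 2) := by
      rw [pt, if_neg (by omega), if_neg (by omega), if_neg (by omega), if_neg (by omega)]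
    have e3 : rp t (u, (2 : Fin 3)) = s(u.val - t, u.val) := by
      rw [rp]; simp only
      rw [if_neg (by omega), if_pos trivial, if_neg (by omega), if_neg (by omega)]
    refine ⟨by simp [e1, e2] <;> omega, ?_, by simp [e1], by simp only [e1]; omega,
      by simp [e1] <;> omega, fun _ _ => by simp [e1]⟩
    rw [e1, e3, show u.val - t = v.val by omega, hy]
    exact Sym2.eq_swap

lemma ncard_seg {t : ℕ} (a k : ℕ) (hak : a + k ≤ 2*t+1) :
    ({u : Fin (2*t+1) | a ≤ u.val ∧ u.val < a + k}).ncard = k := by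
  have : {u : Fin (2*t+1) | a ≤ u.val ∧ u.val < a + k} =
      (fun i : Fin k => (⟨a + i.val, by omega⟩ : Fin (2*t+1))) '' Set.univ := by
    ext u
    constructor
    · rintro ⟨h1, h2⟩
      exact ⟨⟨u.val - a, by omega⟩, trivial, by apply Fin.ext; simp; omega⟩
    · rintro ⟨i, -, rfl⟩
      have := i.isLt
      constructor <;> simp <;> omega
  rw [this, Set.ncard_image_of_injective _ (fun i j hij => by
      apply Fin.ext
      have := congrArg Fin.val hij
      simp at this
      omega)]
  simp [Set.ncard_univ]

lemma nbr_zero {t : ℕ} (h3 : 3 ≤ t) :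
    (Gr t).neighborSet ⟨0, by omega⟩ = {u : Fin (2*t+1) | 2 ≤ u.val ∧ u.val < 2 + t} := by
  ext u
  rw [mem_neighborSet, adj_iff]
  simp only [rel, Set.mem_setOf_eq, true_and, and_true, false_and, and_false]
  omega

lemma nbr_one {t : ℕ} (h3 : 3 ≤ t) :
    (Gr t).neighborSet ⟨1, by omega⟩ = {u : Fin (2*t+1) | t+1 ≤ u.val ∧ u.val < (t+1) + t} := by
  ext u
  rw [mem_neighborSet, adj_iff]
  simp only [rel, Set.mem_setOf_eq, true_and, and_true, false_and, and_false]
  omega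

lemma deg_zero {t : ℕ} (h3 : 3 ≤ t) : deg (Gr t) ⟨0, by omega⟩ = t := by
  rw [deg, nbr_zero h3, ncard_seg 2 t (by omega)]

lemma deg_one {t : ℕ} (h3 : 3 ≤ t) : deg (Gr t) ⟨1, by omega⟩ = t := by
  rw [deg, nbr_one h3, ncard_seg (t+1) t (by omega)]

lemma deg_le {t : ℕ} (h4 : 4 ≤ t) (v : Fin (2*t+1)) : deg (Gr t) v ≤ t := by
  have hv := v.isLt
  rcases lt_trichotomy v.val 2 with h | h | h
  · have h0 : v.val = 0 ∨ v.val = 1 := by omega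
    rcases h0 with h0 | h0
    · rw [show v = ⟨0, by omega⟩ from Fin.ext h0, deg_zero (by omega)]
    · rw [show v = ⟨1, by omega⟩ from Fin.ext h0, deg_one (by omega)]
  · -- v.val = 2 and below case: 2 ≤ v.val: same proof
    set x : Fin (2*t+1) := if hx : v.val + t < 2*t+1 then ⟨v.val + t, hx⟩ else ⟨0, by omega⟩ with hxdef
    set y : Fin (2*t+1) := if hy : t ≤ v.val then ⟨v.val - t, by omega⟩ else ⟨0, by omega⟩ with hydef
    have hsub : (Gr t).neighborSet v ⊆
        {(⟨0, by omega⟩ : Fin (2*t+1)), ⟨1, by omega⟩, x, y} := by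
      intro u hu
      have hu2 := u.isLt
      rw [mem_neighborSet, adj_iff] at hu
      rcases hu with (⟨hx1, hy1, hy2⟩ | ⟨hx1, hy1, hy2⟩ | ⟨hx1, hx2, hy1⟩) |
        (⟨hx1, hy1, hy2⟩ | ⟨hx1, hy1, hy2⟩ | ⟨hx1, hx2, hy1⟩)
      · omega
      · omega
      · right; right; left
        rw [hxdef, dif_pos (by omega)]
        exact Fin.ext (by simp; omega)
      · left; exact Fin.ext (by show u.val = 0; omega)
      · right; left; exact Fin.ext (by simp; omega)
      · right; right; right
        rw [hydef, dif_pos (by omega)]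
        exact Fin.ext (by simp; omega)
    refine le_trans (Set.ncard_le_ncard hsub (Set.toFinite _)) (le_trans ?_ (by omega : 4 ≤ t))
    refine le_trans (Set.ncard_insert_le _ _) ?_
    have h1 := Set.ncard_insert_le (⟨1, by omega⟩ : Fin (2*t+1)) ({x, y} : Set (Fin (2*t+1)))
    have h2 := Set.ncard_insert_le x ({y} : Set (Fin (2*t+1)))
    have h3 := Set.ncard_singleton y
    omega
  · set x : Fin (2*t+1) := if hx : v.val + t < 2*t+1 then ⟨v.val + t, hx⟩ else ⟨0, by omega⟩ with hxdef
    set y : Fin (2*t+1) := if hy : t ≤ v.val then ⟨v.val - t, by omega⟩ else ⟨0, by omega⟩ with hydef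
    have hsub : (Gr t).neighborSet v ⊆
        {(⟨0, by omega⟩ : Fin (2*t+1)), ⟨1, by omega⟩, x, y} := by
      intro u hu
      have hu2 := u.isLt
      rw [mem_neighborSet, adj_iff] at hu
      rcases hu with (⟨hx1, hy1, hy2⟩ | ⟨hx1, hy1, hy2⟩ | ⟨hx1, hx2, hy1⟩) |
        (⟨hx1, hy1, hy2⟩ | ⟨hx1, hy1, hy2⟩ | ⟨hx1, hx2, hy1⟩)
      · omega
      · omega
      · right; right; left
        rw [hxdef, dif_pos (by omega)]
        exact Fin.ext (by simp; omega)
      · left; exact Fin.ext (by show u.val = 0; omega)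
      · right; left; exact Fin.ext (by simp; omega)
      · right; right; right
        rw [hydef, dif_pos (by omega)]
        exact Fin.ext (by simp; omega)
    refine le_trans (Set.ncard_le_ncard hsub (Set.toFinite _)) (le_trans ?_ (by omega : 4 ≤ t))
    refine le_trans (Set.ncard_insert_le _ _) ?_
    have h1 := Set.ncard_insert_le (⟨1, by omega⟩ : Fin (2*t+1)) ({x, y} : Set (Fin (2*t+1)))
    have h2 := Set.ncard_insert_le x ({y} : Set (Fin (2*t+1)))
    have h3 := Set.ncard_singleton y
    omega

lemma maxDeg_eq {t : ℕ} (h4 : 4 ≤ t) : maxDeg (Gr t) = t := by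
  apply le_antisymm
  · exact Finset.sup_le fun v _ => deg_le h4 v
  · have h := Finset.le_sup (f := deg (Gr t)) (Finset.mem_univ (⟨0, by omega⟩ : Fin (2*t+1)))
    rw [deg_zero (by omega)] at h
    exact h

lemma sq_adj_lt {t : ℕ} (h4 : 4 ≤ t) {u v : Fin (2*t+1)}
    (hu : u.val < t+2) (hv : v.val < t+2) (hlt : u.val < v.val) :
    (Gr t).square.Adj u v := by
  have hne : u ≠ v := fun h => by rw [h] at hlt; omega
  refine ⟨hne, ?_⟩
  rcases Nat.lt_or_ge u.val 1 with h0 | h0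
  · rcases Nat.lt_or_ge v.val 2 with h1 | h1
    · -- u = 0, v = 1 : common neighbor t+1
      refine Or.inr ⟨⟨t+1, by omega⟩, Or.inl (Or.inl ⟨by omega, ?_, ?_⟩),
        Or.inr (Or.inr (Or.inl ⟨by omega, ?_, ?_⟩))⟩
      · show 2 ≤ t+1; omega
      · show t+1 ≤ t+1; omega
      · show t+1 ≤ t+1; omega
      · show t+1 ≤ 2*t; omega
    · -- u = 0, 2 ≤ v ≤ t+1 : edge
      exact Or.inl (Or.inl (Or.inl ⟨by omega, by omega, by omega⟩))
  · rcases Nat.lt_or_ge u.val 2 with h1 | h1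
    · -- u = 1
      rcases Nat.lt_or_ge v.val (t+1) with h2 | h2
      · -- 2 ≤ v ≤ t : common neighbor v + t
        refine Or.inr ⟨⟨v.val + t, by omega⟩, Or.inl (Or.inr (Or.inl ⟨by omega, ?_, ?_⟩)),
          Or.inr (Or.inr (Or.inr ⟨by omega, by omega, rfl⟩))⟩
        · show t+1 ≤ v.val + t; omega
        · show v.val + t ≤ 2*t; omega
      · -- v = t+1 : edge
        exact Or.inl (Or.inl (Or.inr (Or.inl ⟨by omega, by omega, by omega⟩)))
    · -- 2 ≤ u < v ≤ t+1 : common neighbor 0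
      refine Or.inr ⟨⟨0, by omega⟩, Or.inr (Or.inl ⟨rfl, by omega, by omega⟩),
        Or.inl (Or.inl ⟨rfl, by omega, by omega⟩)⟩

def S (t : ℕ) : Finset (Fin (2*t+1)) :=
  (Finset.univ : Finset (Fin (t+2))).image
    (fun i => (⟨min i.val (2*t), by omega⟩ : Fin (2*t+1)))

lemma S_card {t : ℕ} (h4 : 4 ≤ t) : (S t).card = t + 2 := by
  rw [S, Finset.card_image_of_injective _ (fun i j hij => Fin.ext (by
    have hij' := congrArg Fin.val hij
    have hi := i.isLt
    have hj := j.isLt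
    simp only at hij'
    omega))]
  simp

lemma S_clique {t : ℕ} (h4 : 4 ≤ t) : (Gr t).square.IsClique (S t) := by
  intro u hu v hv hne
  have hu' : u.val < t + 2 := by
    simp only [S, Finset.coe_image, Set.mem_image] at hu
    obtain ⟨i, -, rfl⟩ := hu
    have := i.isLt
    simp only
    omega
  have hv' : v.val < t + 2 := by
    simp only [S, Finset.coe_image, Set.mem_image] at hv
    obtain ⟨i, -, rfl⟩ := hv
    have := i.isLt
    simp only
    omega
  rcases lt_trichotomy u.val v.val with h | h | h
  · exact sq_adj_lt h4 hu' hv' h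
  · exact absurd (Fin.ext h) hne
  · exact (sq_adj_lt h4 hv' hu' h).symm

lemma chrom_ge {t : ℕ} (h4 : 4 ≤ t) :
    ((t : ℕ∞) + 2) ≤ (Gr t).square.chromaticNumber := by
  have h := (S_clique h4).card_le_chromaticNumber
  rw [S_card h4] at h
  calc (t : ℕ∞) + 2 = ((t + 2 : ℕ) : ℕ∞) := by push_cast; ring
  _ ≤ _ := h

def tok (t : ℕ) : Sym2 (Fin (2*t+1)) → Finset (Fin (2*t+1) × Fin 3) :=
  Sym2.lift ⟨fun u v => {pt t u v, pt t v u}, fun u v => Finset.pair_comm _ _⟩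

lemma tok_mk {t : ℕ} (u v : Fin (2*t+1)) : tok t s(u, v) = {pt t u v, pt t v u} := rfl

lemma rp_tok {t : ℕ} (h4 : 4 ≤ t) {u v : Fin (2*t+1)} (hG : (Gr t).Adj u v)
    {q} (hq : q ∈ tok t s(u, v)) : rp t q = Sym2.map Fin.val s(u, v) := by
  rw [tok_mk] at hq
  rw [Sym2.map_pair_eq]
  rcases Finset.mem_insert.mp hq with hq | hq
  · rw [hq]; exact (master (by omega) hG).2.1
  · rw [Finset.mem_singleton.mp hq, (master (by omega) hG.symm).2.1]
    exact Sym2.eq_swap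

theorem mad3 {t : ℕ} (h4 : 4 ≤ t) : madLT (Gr t) 3 := by
  intro H hne
  have hWf : H.verts.Finite := Set.toFinite _
  have hEf : H.edgeSet.Finite := Set.toFinite _
  rw [Set.ncard_eq_toFinset_card _ hEf, Set.ncard_eq_toFinset_card _ hWf]
  set EF := hEf.toFinset with hEFdef
  set WF := hWf.toFinset with hWFdef
  have hwpos : 1 ≤ WF.card := by
    obtain ⟨x, hx⟩ := hne
    exact Finset.card_pos.mpr ⟨x, hWf.mem_toFinset.mpr hx⟩
  suffices hkey : 2 * EF.card < 3 * WF.card by exact_mod_cast hkey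
  -- adjacency of edges
  have hadj : ∀ u v : Fin (2*t+1), s(u,v) ∈ EF → H.Adj u v := by
    intro u v he
    exact Subgraph.mem_edgeSet.mp (hEf.mem_toFinset.mp he)
  -- each token set has two elements
  have hcard : ∀ e ∈ EF, (tok t e).card = 2 := by
    intro e
    induction e using Sym2.ind with
    | _ u v =>
      intro he
      rw [tok_mk]
      exact Finset.card_pair (master (by omega) (H.adj_sub (hadj u v he))).1
  -- disjointness
  have hdisj : ∀ e ∈ EF, ∀ e' ∈ EF, e ≠ e' → Disjoint (tok t e) (tok t e') := by
    intro e he e' he' hnee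
    induction e using Sym2.ind with
    | _ u v =>
      induction e' using Sym2.ind with
      | _ u' v' =>
        rw [Finset.disjoint_left]
        intro q hq hq'
        have h1 := rp_tok h4 (H.adj_sub (hadj u v he)) hq
        have h2 := rp_tok h4 (H.adj_sub (hadj u' v' he')) hq'
        exact hnee (Sym2.map.injective Fin.val_injective (h1 ▸ h2 ▸ rfl))
  have hcount : (EF.biUnion (tok t)).card = 2 * EF.card := by
    rw [Finset.card_biUnion hdisj, Finset.sum_congr rfl hcard, Finset.sum_const,
      smul_eq_mul, mul_comm]
  -- token properties
  have htok : ∀ e ∈ EF, ∀ q ∈ tok t e,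
      (q.1 ∈ H.verts ∧ q.1.val ≠ 0 ∧ (q.1.val = 1 → q.2 = 0)) := by
    intro e
    induction e using Sym2.ind with
    | _ u v =>
      intro he q hq
      have hH := hadj u v he
      have hG := H.adj_sub hH
      rw [tok_mk] at hq
      have huv : q.1 ∈ H.verts := by
        rcases Finset.mem_insert.mp hq with hq | hq
        · rcases (master (by omega : (3:ℕ) ≤ t) hG).2.2.1 with h | h
          · rw [hq, h]; exact H.edge_vert hH
          · rw [hq, h]; exact H.edge_vert hH.symm
        · rw [Finset.mem_singleton.mp hq]
          rcases (master (by omega : (3:ℕ) ≤ t) hG.symm).2.2.1 with h | h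
          · rw [h]; exact H.edge_vert hH.symm
          · rw [h]; exact H.edge_vert hH
      refine ⟨huv, ?_, ?_⟩
      · rcases Finset.mem_insert.mp hq with hq | hq
        · rw [hq]; exact (master (by omega : (3:ℕ) ≤ t) hG).2.2.2.1
        · rw [Finset.mem_singleton.mp hq]
          exact (master (by omega : (3:ℕ) ≤ t) hG.symm).2.2.2.1
      · rcases Finset.mem_insert.mp hq with hq | hq
        · rw [hq]; exact (master (by omega : (3:ℕ) ≤ t) hG).2.2.2.2.1
        · rw [Finset.mem_singleton.mp hq]
          exact (master (by omega : (3:ℕ) ≤ t) hG.symm).2.2.2.2.1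
  set z0 : Fin (2*t+1) := ⟨0, by omega⟩ with hz0
  set z1 : Fin (2*t+1) := ⟨1, by omega⟩ with hz1
  by_cases h01 : z0 ∈ H.verts ∨ z1 ∈ H.verts
  · -- tokens land in ((WF.erase z0).erase z1) ×ˢ univ ∪ {(z1, 0)}
    have hsub : EF.biUnion (tok t) ⊆
        ((WF.erase z0).erase z1) ×ˢ (Finset.univ : Finset (Fin 3)) ∪ {(z1, 0)} := by
      intro q hq
      obtain ⟨e, he, hqe⟩ := Finset.mem_biUnion.mp hq
      obtain ⟨hv1, hv2, hv3⟩ := htok e he q hqe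
      rw [Finset.mem_union]
      by_cases hq1 : q.1.val = 1
      · right
        rw [Finset.mem_singleton]
        have : q.1 = z1 := Fin.ext hq1
        rw [← this, ← hv3 hq1]
      · left
        rw [Finset.mem_product]
        refine ⟨?_, Finset.mem_univ _⟩
        rw [Finset.mem_erase, Finset.mem_erase]
        exact ⟨fun h => hq1 (congrArg Fin.val h), fun h => hv2 (congrArg Fin.val h),
          hWf.mem_toFinset.mpr hv1⟩
    have hTcard : (((WF.erase z0).erase z1) ×ˢ (Finset.univ : Finset (Fin 3)) ∪ {(z1, 0)}).card
        ≤ ((WF.erase z0).erase z1).card * 3 + 1 := by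
      refine le_trans (Finset.card_union_le _ _) ?_
      rw [Finset.card_product]
      simp
    have herase : ((WF.erase z0).erase z1).card ≤ WF.card - 1 := by
      rcases h01 with h0 | h0
      · calc ((WF.erase z0).erase z1).card ≤ (WF.erase z0).card := Finset.card_erase_le
        _ = WF.card - 1 := Finset.card_erase_of_mem (hWf.mem_toFinset.mpr h0)
      · have hzm : z1 ∈ WF.erase z0 :=
          Finset.mem_erase.mpr ⟨fun h => by simpa using congrArg Fin.val h,
            hWf.mem_toFinset.mpr h0⟩
        calc ((WF.erase z0).erase z1).card = (WF.erase z0).card - 1 :=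
            Finset.card_erase_of_mem hzm
        _ ≤ WF.card - 1 := by
            have := Finset.card_erase_le (s := WF) (a := z0)
            omega
    have := Finset.card_le_card hsub
    omega
  · push_neg at h01
    obtain ⟨h0, h1⟩ := h01
    have hsub : EF.biUnion (tok t) ⊆ WF ×ˢ ({2} : Finset (Fin 3)) := by
      intro q hq
      obtain ⟨e, he, hqe⟩ := Finset.mem_biUnion.mp hq
      revert he hqe
      induction e using Sym2.ind with
      | _ u v =>
        intro he hqe
        have hH := hadj u v he
        have hG := H.adj_sub hH
        have hu2 : 2 ≤ u.val := by
          have hu0 : u ∈ H.verts := H.edge_vert hH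
          have n0 : u.val ≠ 0 := fun h => h0 (by rwa [show z0 = u from (Fin.ext h).symm])
          have n1 : u.val ≠ 1 := fun h => h1 (by rwa [show z1 = u from (Fin.ext h).symm])
          omega
        have hv2 : 2 ≤ v.val := by
          have hv0 : v ∈ H.verts := H.edge_vert hH.symm
          have n0 : v.val ≠ 0 := fun h => h0 (by rwa [show z0 = v from (Fin.ext h).symm])
          have n1 : v.val ≠ 1 := fun h => h1 (by rwa [show z1 = v from (Fin.ext h).symm])
          omega
        rw [Finset.mem_product]
        obtain ⟨hm1, -, -⟩ := htok s(u,v) he q hqe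
        refine ⟨hWf.mem_toFinset.mpr hm1, ?_⟩
        rw [tok_mk] at hqe
        rw [Finset.mem_singleton]
        rcases Finset.mem_insert.mp hqe with hq' | hq'
        · rw [hq']; exact (master (by omega : (3:ℕ) ≤ t) hG).2.2.2.2.2 hu2 hv2
        · rw [Finset.mem_singleton.mp hq']
          exact (master (by omega : (3:ℕ) ≤ t) hG.symm).2.2.2.2.2 hv2 hu2
    have hTcard : (WF ×ˢ ({2} : Finset (Fin 3))).card = WF.card := by
      rw [Finset.card_product]
      simp
    have := Finset.card_le_card hsub
    omega


end Cons

lemma part1 : ∀ D : ℤ, ∃ (n : ℕ) (G : SimpleGraph (Fin n)),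
    D ≤ (maxDeg G : ℤ) ∧ madLT G 3 ∧
    (maxDeg G : ℕ∞) + 2 ≤ (G.square).chromaticNumber := by
  intro D
  set t : ℕ := max 4 D.toNat with ht
  have h4 : 4 ≤ t := le_max_left _ _
  refine ⟨2 * t + 1, Cons.Gr t, ?_, Cons.mad3 h4, ?_⟩
  · rw [Cons.maxDeg_eq h4]
    calc D ≤ (D.toNat : ℤ) := Int.self_le_toNat D
    _ ≤ (t : ℤ) := by exact_mod_cast le_max_right 4 D.toNat
  · rw [Cons.maxDeg_eq h4]
    exact Cons.chrom_ge h4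

theorem statement14 :
    (∀ D : ℤ, ∃ (n : ℕ) (G : SimpleGraph (Fin n)),
      D ≤ (maxDeg G : ℤ) ∧ madLT G 3 ∧
      (maxDeg G : ℕ∞) + 2 ≤ (G.square).chromaticNumber) ∧
    ¬ ∃ D₀ : ℤ, ∀ (n : ℕ) (G : SimpleGraph (Fin n)),
      madLT G 3 → D₀ ≤ (maxDeg G : ℤ) →
      (G.square).chromaticNumber = ((maxDeg G + 1 : ℕ) : ℕ∞) := by
  refine ⟨part1, ?_⟩
  rintro ⟨D₀, hD₀⟩
  obtain ⟨n, G, h1, h2, h3⟩ := part1 D₀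
  rw [hD₀ n G h2 h1] at h3
  have h4 : ((maxDeg G + 2 : ℕ) : ℕ∞) ≤ ((maxDeg G + 1 : ℕ) : ℕ∞) := by
    calc ((maxDeg G + 2 : ℕ) : ℕ∞) = (maxDeg G : ℕ∞) + 2 := by push_cast; ring
    _ ≤ _ := h3
  have h5 : maxDeg G + 2 ≤ maxDeg G + 1 := Nat.cast_le.mp h4
  omega
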